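/- Let u, w : ℝ^N → [0,∞) be Lipschitz continuous, compactly supported and suppose ∫ u w dz = ∫ u^# w^# dz. Then for each i = 1,…,m, ∫_{ℝ^N} u_{y_i} w_{y_i} dz ≥ ∫_{ℝ^N} (u^#)_{y_i} (w^#)_{y_i} dz, where subscripts denote partial derivatives in the y-variables. -/

import Mathlib

open MeasureTheory Set Metric Filter
open scoped ENNReal
noncomputable section

/-- ℝ^n as Euclidean space. -/
abbrev En (n : ℕ) := EuclideanSpace ℝ (Fin n)

/-- Distribution function of `u` : μ_u(t) = ℒ^n({u > t}). -/
def distFun {n : ℕ} (u : En n → ℝ) (t : ℝ) : ℝ := (volume {x : En n | t < u x}).toReal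

/-- Decreasing rearrangement u*(s) = sup{t ≥ 0 : μ_u(t) > s}. -/
def decRearr {n : ℕ} (u : En n → ℝ) (s : ℝ) : ℝ := sSup {t : ℝ | 0 ≤ t ∧ s < distFun u t}

/-- Volume of the unit ball of ℝ^n. -/
def omegaN (n : ℕ) : ℝ := (volume (ball (0 : En n) 1)).toReal

/-- Schwarz (spherically symmetric decreasing) rearrangement: u⋆(x) = u*(ω_n |x|^n). -/
def schwarz {n : ℕ} (u : En n → ℝ) (x : En n) : ℝ := decRearr u (omegaN n * ‖x‖ ^ n)

/-- Ω⋆ : the centered open ball with the same measure as Ω. -/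
def schwarzSet {n : ℕ} (Ω : Set (En n)) : Set (En n) :=
  {x | omegaN n * ‖x‖ ^ n < (volume Ω).toReal}

/-- Steiner symmetrization in codimension n : Schwarz rearrangement of each slice x ↦ u(x,y). -/
def steiner {n m : ℕ} (u : En n × En m → ℝ) (z : En n × En m) : ℝ :=
  schwarz (fun x => u (x, z.2)) z.1

/-- Steiner symmetrization of a set : each y-section replaced by the centered ball
of the same n-dimensional measure. -/
def steinerSet {n m : ℕ} (Ω : Set (En n × En m)) : Set (En n × En m) :=
  {z | omegaN n * ‖z.1‖ ^ n < (volume {x : En n | (x, z.2) ∈ Ω}).toReal}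

/-- Gradient in the x-variables, ∇ₓu(x,y). -/
def gradx {n m : ℕ} (u : En n × En m → ℝ) (z : En n × En m) : En n :=
  gradient (fun x => u (x, z.2)) z.1

/-- Partial derivative in the y_i variable. -/
def dery {n m : ℕ} (u : En n × En m → ℝ) (i : Fin m) (z : En n × En m) : ℝ :=
  deriv (fun t : ℝ => u (z.1, z.2 + t • EuclideanSpace.single i (1:ℝ))) 0

/-- Laplacian in the x-variables only. -/
def lapx {n m : ℕ} (u : En n × En m → ℝ) (z : En n × En m) : ℝ :=
  ∑ i : Fin n, iteratedDeriv 2 (fun t : ℝ => u (z.1 + t • EuclideanSpace.single i (1:ℝ), z.2)) 0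

/-- Full Laplacian on ℝ^n × ℝ^m via coordinate second derivatives. -/
def lapFull {n m : ℕ} (u : En n × En m → ℝ) (z : En n × En m) : ℝ :=
  lapx u z + ∑ j : Fin m, iteratedDeriv 2 (fun t : ℝ => u (z.1, z.2 + t • EuclideanSpace.single j (1:ℝ))) 0

/-- Full Dirichlet inner product density ∇u·∇w = ∇ₓu·∇ₓw + Σᵢ u_{yᵢ} w_{yᵢ}. -/
def gradDot {n m : ℕ} (u w : En n × En m → ℝ) (z : En n × En m) : ℝ :=
  (inner ℝ (gradx u z) (gradx w z) : ℝ) + ∑ i : Fin m, dery u i z * dery w i z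

/-- An encoding of membership in W_0^{1,p}(Ω) for Ω ⊆ ℝ^n × ℝ^m :
`u ∈ Lᵖ`, a.e. differentiable with gradient in `Lᵖ`, vanishing outside Ω. -/
def memW1p0P {n m : ℕ} (p : ℝ≥0∞) (Ω : Set (En n × En m)) (u : En n × En m → ℝ) : Prop :=
  MemLp u p volume ∧ (∀ᵐ z ∂(volume : Measure (En n × En m)), DifferentiableAt ℝ u z) ∧
    MemLp (fun z => ‖fderiv ℝ u z‖) p volume ∧ ∀ z ∉ Ω, u z = 0

open scoped NNReal Topology

namespace PSaux

variable {n m : ℕ} {f g : En n → ℝ}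

abbrev lev (f : En n → ℝ) (t : ℝ) : Set (En n) := {x | t < f x}

lemma volume_lev_lt_top (hfc : HasCompactSupport f) {t : ℝ} (ht : 0 ≤ t) :
    volume (lev f t) < ∞ := by
  have hsub : lev f t ⊆ tsupport f := by
    intro x hx
    exact subset_tsupport f (ne_of_gt (lt_of_le_of_lt ht hx))
  exact lt_of_le_of_lt (measure_mono hsub) hfc.measure_lt_top

lemma distFun_nonneg {t : ℝ} : 0 ≤ distFun f t := ENNReal.toReal_nonneg

lemma distFun_anti (hfc : HasCompactSupport f) {t t' : ℝ} (ht : 0 ≤ t) (h : t ≤ t') :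
    distFun f t' ≤ distFun f t := by
  apply ENNReal.toReal_mono (volume_lev_lt_top hfc ht).ne
  exact measure_mono (fun x hx => lt_of_le_of_lt h hx)

lemma mem_set_le {M s t : ℝ} (hM : ∀ x, f x ≤ M) (hs : 0 ≤ s)
    (ht : 0 ≤ t ∧ s < distFun f t) : t ≤ M := by
  obtain ⟨_, hst⟩ := ht
  have hpos : 0 < distFun f t := lt_of_le_of_lt hs hst
  have hne : volume (lev f t) ≠ 0 := by
    intro h0
    rw [distFun] at hpos
    simp only [h0, ENNReal.toReal_zero, lt_self_iff_false] at hpos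
  obtain ⟨x, hx⟩ := nonempty_of_measure_ne_zero hne
  exact le_trans (le_of_lt hx) (hM x)

lemma bddAbove_set {M s : ℝ} (hM : ∀ x, f x ≤ M) (hs : 0 ≤ s) :
    BddAbove {t : ℝ | 0 ≤ t ∧ s < distFun f t} :=
  ⟨M, fun _ ht => mem_set_le hM hs ht⟩

lemma decRearr_nonneg {s : ℝ} : 0 ≤ decRearr f s :=
  Real.sSup_nonneg (fun _ ht => ht.1)

lemma decRearr_le {M s : ℝ} (hM : ∀ x, f x ≤ M) (hM0 : 0 ≤ M) (hs : 0 ≤ s) :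
    decRearr f s ≤ M :=
  Real.sSup_le (fun _ ht => mem_set_le hM hs ht) hM0

lemma schwarz_nonneg (x : En n) : 0 ≤ schwarz f x := decRearr_nonneg

/-- Right continuity of the distribution function, in the form we need. -/
lemma exists_distFun_gt (hfc : HasCompactSupport f)
    {s t : ℝ} (ht : 0 ≤ t) (hs : s < distFun f t) :
    ∃ t', t < t' ∧ s < distFun f t' := by
  rcases lt_or_ge s 0 with hs0 | hs0
  · exact ⟨t + 1, by linarith, lt_of_lt_of_le hs0 distFun_nonneg⟩
  by_contra hcon
  push_neg at hcon
  set A : ℕ → Set (En n) := fun k => lev f (t + 1/(k+1)) with hA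
  have hunion : lev f t = ⋃ k, A k := by
    ext x
    simp only [mem_iUnion, hA, lev, mem_setOf_eq]
    constructor
    · intro hx
      obtain ⟨k, hk⟩ := exists_nat_one_div_lt (sub_pos.mpr hx)
      exact ⟨k, by linarith⟩
    · intro ⟨k, hk⟩
      have : (0:ℝ) < 1/(k+1) := by positivity
      linarith
  have hmono : Monotone A := by
    intro i j hij x hx
    simp only [hA, lev, mem_setOf_eq] at hx ⊢
    have : (1:ℝ)/(j+1) ≤ 1/(i+1) := by
      apply one_div_le_one_div_of_le (by positivity)
      exact_mod_cast by omega
    linarith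
  have hsup : volume (lev f t) = ⨆ k, volume (A k) := by
    rw [hunion]
    exact hmono.directed_le.measure_iUnion
  have hle : ∀ k, volume (A k) ≤ ENNReal.ofReal s := by
    intro k
    have h1 : t < t + 1/(k+1) := by
      have : (0:ℝ) < 1/(k+1) := by positivity
      linarith
    have h2 : distFun f (t + 1/(k+1)) ≤ s := hcon _ h1
    have hfin : volume (A k) ≠ ∞ := (volume_lev_lt_top hfc (by linarith)).ne
    rwa [ENNReal.le_ofReal_iff_toReal_le hfin hs0]
  have : volume (lev f t) ≤ ENNReal.ofReal s := hsup ▸ iSup_le hle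
  have : distFun f t ≤ s := by
    have := ENNReal.toReal_mono ENNReal.ofReal_ne_top this
    rwa [ENNReal.toReal_ofReal hs0] at this
  linarith

/-- The superlevel sets of the Schwarz symmetrization are "balls". -/
lemma schwarz_gt_iff {M : ℝ} (hfc : HasCompactSupport f) (hM : ∀ x, f x ≤ M)
    {t : ℝ} (ht : 0 ≤ t) (x : En n) :
    t < schwarz f x ↔ omegaN n * ‖x‖ ^ n < distFun f t := by
  have hs0 : 0 ≤ omegaN n * ‖x‖ ^ n := by
    apply mul_nonneg ENNReal.toReal_nonneg (by positivity)
  constructor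
  · intro hx
    have hne : {t' : ℝ | 0 ≤ t' ∧ omegaN n * ‖x‖ ^ n < distFun f t'}.Nonempty := by
      by_contra hemp
      rw [not_nonempty_iff_eq_empty] at hemp
      have : schwarz f x = 0 := by
        rw [schwarz, decRearr, hemp, Real.sSup_empty]
      rw [this] at hx; linarith
    obtain ⟨a, ha, hta⟩ := exists_lt_of_lt_csSup hne hx
    exact lt_of_lt_of_le ha.2 (distFun_anti hfc ht (le_of_lt hta))
  · intro hx
    obtain ⟨t', htt', ht'⟩ := exists_distFun_gt hfc ht hx
    calc t < t' := htt'
    _ ≤ schwarz f x := le_csSup (bddAbove_set hM hs0) ⟨le_trans ht (le_of_lt htt'), ht'⟩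

lemma nontrivial_En (hn : 1 ≤ n) : Nontrivial (En n) := by
  have : Nonempty (Fin n) := ⟨⟨0, hn⟩⟩
  exact ⟨⟨EuclideanSpace.single ⟨0, hn⟩ (1:ℝ), 0, by
    intro h
    have := congrArg (fun v : En n => v ⟨0, hn⟩) h
    simp [EuclideanSpace.single_apply] at this⟩⟩

lemma omegaN_pos (hn : 1 ≤ n) : 0 < omegaN n := by
  rw [omegaN]
  apply ENNReal.toReal_pos
  · exact (IsOpen.measure_pos volume isOpen_ball ⟨0, by simp⟩).ne'
  · exact (measure_ball_lt_top).ne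

lemma volume_ball_one (hn : 1 ≤ n) :
    volume (ball (0 : En n) 1) = ENNReal.ofReal (omegaN n) := by
  rw [omegaN, ENNReal.ofReal_toReal measure_ball_lt_top.ne]

/-- Volume of the sub-level set of ω‖x‖ⁿ. -/
lemma volume_omega_lt (hn : 1 ≤ n) (c : ℝ) :
    volume {x : En n | omegaN n * ‖x‖ ^ n < c} = ENNReal.ofReal c := by
  haveI := nontrivial_En hn
  have hω := omegaN_pos hn
  rcases le_or_gt c 0 with hc | hc
  · have : {x : En n | omegaN n * ‖x‖ ^ n < c} = ∅ := by
      ext x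
      simp only [mem_setOf_eq, mem_empty_iff_false, iff_false, not_lt]
      exact le_trans hc (by positivity)
    rw [this, measure_empty, ENNReal.ofReal_of_nonpos hc]
  · set r : ℝ := (c / omegaN n) ^ (1/(n:ℝ)) with hr
    have hcw : 0 < c / omegaN n := by positivity
    have hr0 : 0 < r := Real.rpow_pos_of_pos hcw _
    have hrn : r ^ n = c / omegaN n := by
      rw [hr, ← Real.rpow_natCast ((c / omegaN n) ^ (1/(n:ℝ))) n, ← Real.rpow_mul (le_of_lt hcw)]
      rw [one_div, inv_mul_cancel₀ (by positivity)]
      exact Real.rpow_one _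
    have hset : {x : En n | omegaN n * ‖x‖ ^ n < c} = ball (0 : En n) r := by
      ext x
      simp only [mem_setOf_eq, mem_ball, dist_zero_right]
      constructor
      · intro h
        have h1 : ‖x‖ ^ n < r ^ n := by
          rw [hrn]
          rw [lt_div_iff₀' hω]
          exact h
        exact lt_of_pow_lt_pow_left₀ n (le_of_lt hr0) h1
      · intro h
        have h1 : ‖x‖ ^ n < r ^ n := by
          apply pow_lt_pow_left₀ h (norm_nonneg x)
          omega
        rw [hrn, lt_div_iff₀' hω] at h1
        exact h1
    rw [hset, Measure.addHaar_ball volume 0 (le_of_lt hr0), volume_ball_one hn,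
      finrank_euclideanSpace_fin, ← ENNReal.ofReal_mul (by positivity), hrn]
    congr 1
    field_simp

/-- Unbounded space: for n ≥ 1 there is a point outside the support where f vanishes. -/
lemma exists_zero (hn : 1 ≤ n) (hfc : HasCompactSupport f) : ∃ b, f b = 0 := by
  obtain ⟨R, hR⟩ := hfc.isBounded.subset_closedBall 0
  have : Nonempty (Fin n) := ⟨⟨0, hn⟩⟩
  refine ⟨EuclideanSpace.single ⟨0, hn⟩ (R+1), ?_⟩
  by_contra h
  have hmem := hR (subset_tsupport f h)
  rw [mem_closedBall, dist_zero_right, EuclideanSpace.norm_single] at hmem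
  have : (0:ℝ) ≤ R := le_trans (norm_nonneg _) hmem
  rw [Real.norm_eq_abs, abs_of_nonneg (by linarith)] at hmem
  linarith

/-- Strict decrease of the distribution function below the sup. -/
lemma distFun_strict (hn : 1 ≤ n) (hf : Continuous f) (hf0 : ∀ x, 0 ≤ f x)
    (hfc : HasCompactSupport f) {t1 t2 : ℝ} (ht1 : 0 ≤ t1) (h12 : t1 < t2)
    (hex : ∃ a, t2 < f a) : distFun f t2 < distFun f t1 := by
  obtain ⟨a, ha⟩ := hex
  obtain ⟨b, hb⟩ := exists_zero hn hfc
  set c := (t1 + t2)/2 with hc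
  have hc1 : t1 < c := by rw [hc]; linarith
  have hc2 : c < t2 := by rw [hc]; linarith
  have hmem : c ∈ Icc (f b) (f a) := by
    constructor
    · rw [hb]; linarith
    · linarith
  obtain ⟨x0, hx0⟩ := intermediate_value_univ b a hf hmem
  set O : Set (En n) := f ⁻¹' (Ioo t1 t2) with hO
  have hOopen : IsOpen O := (isOpen_Ioo).preimage hf
  have hOne : O.Nonempty := ⟨x0, by
    simp only [hO, mem_preimage, mem_Ioo, hx0]
    exact ⟨hc1, hc2⟩⟩
  have hOpos : 0 < volume O := IsOpen.measure_pos volume hOopen hOne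
  have hdisj : Disjoint O (lev f t2) := by
    rw [disjoint_left]
    intro x hx hx2
    simp only [hO, mem_preimage, mem_Ioo] at hx
    exact absurd hx2 (not_lt.mpr (le_of_lt hx.2))
  have hsub : O ∪ lev f t2 ⊆ lev f t1 := by
    intro x hx
    rcases hx with hx | hx
    · simp only [hO, mem_preimage, mem_Ioo] at hx
      exact hx.1
    · exact lt_trans h12 hx
  have hmeas : volume (lev f t1) ≥ volume O + volume (lev f t2) := by
    calc volume (lev f t1) ≥ volume (O ∪ lev f t2) := measure_mono hsub
    _ = volume O + volume (lev f t2) := by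
        apply measure_union hdisj
        exact (isOpen_lt continuous_const hf).measurableSet
  have hfin1 : volume (lev f t1) < ∞ := volume_lev_lt_top hfc ht1
  have hfin2 : volume (lev f t2) < ∞ := volume_lev_lt_top hfc (by linarith)
  rw [distFun, distFun]
  rw [ENNReal.toReal_lt_toReal hfin2.ne hfin1.ne]
  calc volume (lev f t2) < volume (lev f t2) + volume O :=
        ENNReal.lt_add_right hfin2.ne hOpos.ne'
  _ = volume O + volume (lev f t2) := add_comm _ _
  _ ≤ volume (lev f t1) := hmeas

/-- If nothing exceeds t then distFun f t is 0. -/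
lemma distFun_eq_zero (h : ∀ x, f x ≤ t) : distFun f t = 0 := by
  have : lev f t = ∅ := by
    ext x; simp only [lev, mem_setOf_eq, mem_empty_iff_false, iff_false, not_lt]; exact h x
  rw [distFun]
  show (volume (lev f t)).toReal = 0
  rw [this, measure_empty, ENNReal.toReal_zero]

/-- decRearr is antitone. -/
lemma decRearr_anti {M s s' : ℝ} (hM : ∀ x, f x ≤ M) (hs : 0 ≤ s) (h : s ≤ s') :
    decRearr f s' ≤ decRearr f s := by
  rcases eq_empty_or_nonempty {t : ℝ | 0 ≤ t ∧ s' < distFun f t} with he | hne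
  · rw [decRearr, he, Real.sSup_empty]; exact decRearr_nonneg
  · apply csSup_le_csSup ?_ hne
    · intro t ht
      exact ⟨ht.1, lt_of_le_of_lt h ht.2⟩
    · exact bddAbove_set hM hs

/-- Right continuity of decRearr. -/
lemma decRearr_right {M : ℝ} (hM : ∀ x, f x ≤ M) {s0 ε : ℝ} (hs0 : 0 ≤ s0) (hε : 0 < ε) :
    ∃ δ > 0, ∀ s, s0 ≤ s → s < s0 + δ → decRearr f s0 - ε ≤ decRearr f s := by
  rcases le_or_gt (decRearr f s0) ε with hle | hlt
  · exact ⟨1, one_pos, fun s _ _ => by linarith [decRearr_nonneg (f := f) (s := s)]⟩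
  have hne : {t : ℝ | 0 ≤ t ∧ s0 < distFun f t}.Nonempty := by
    by_contra hemp
    rw [not_nonempty_iff_eq_empty] at hemp
    rw [decRearr, hemp, Real.sSup_empty] at hlt
    linarith
  have : decRearr f s0 - ε < sSup {t : ℝ | 0 ≤ t ∧ s0 < distFun f t} := by
    rw [decRearr] at *; linarith
  obtain ⟨a, ha, haa⟩ := exists_lt_of_lt_csSup hne this
  refine ⟨distFun f a - s0, by linarith [ha.2], fun s hs1 hs2 => ?_⟩
  have : s < distFun f a := by linarith
  calc decRearr f s0 - ε ≤ a := le_of_lt haa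
  _ ≤ decRearr f s := le_csSup (bddAbove_set hM (le_trans hs0 hs1)) ⟨ha.1, this⟩

/-- Left continuity of decRearr, using strict decrease of the distribution function. -/
lemma decRearr_left (hn : 1 ≤ n) (hf : Continuous f) (hf0 : ∀ x, 0 ≤ f x)
    (hfc : HasCompactSupport f) {M : ℝ} (hM : ∀ x, f x ≤ M) (hM0 : 0 ≤ M)
    {s0 ε : ℝ} (hs0 : 0 ≤ s0) (hε : 0 < ε) :
    ∃ δ > 0, ∀ s, 0 ≤ s → s0 - δ < s → s ≤ s0 → decRearr f s ≤ decRearr f s0 + ε := by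
  set t1 : ℝ := decRearr f s0 + ε/2 with ht1def
  set tm : ℝ := decRearr f s0 + 3*ε/4 with htmdef
  have ht10 : 0 ≤ t1 := by have := decRearr_nonneg (f := f) (s := s0); rw [ht1def]; linarith
  have h1m : t1 < tm := by rw [ht1def, htmdef]; linarith
  -- key bound : for any s, any member t of the set with t ≥ tm forces μ(tm) > s
  have hkey : ∀ s : ℝ, 0 ≤ s → distFun f tm ≤ s → decRearr f s ≤ decRearr f s0 + ε := by
    intro s hs hms
    apply Real.sSup_le ?_ (by have := decRearr_nonneg (f := f) (s := s0); linarith)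
    intro t ht
    rcases le_or_gt t tm with h | h
    · rw [htmdef] at h; linarith
    · exfalso
      have : distFun f t ≤ distFun f tm := distFun_anti hfc (by rw [htmdef]; have := decRearr_nonneg (f := f) (s := s0); linarith) (le_of_lt h)
      linarith [ht.2]
  rcases em (∃ a, tm < f a) with hex | hnex
  · -- strict decrease
    have hμ1 : distFun f t1 ≤ s0 := by
      by_contra hcon
      push_neg at hcon
      have : t1 ≤ decRearr f s0 := le_csSup (bddAbove_set hM hs0) ⟨ht10, hcon⟩
      rw [ht1def] at this; linarith
    have hstrict : distFun f tm < distFun f t1 := distFun_strict hn hf hf0 hfc ht10 h1m hex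
    refine ⟨s0 - distFun f tm, by linarith, fun s hs1 hs2 _ => ?_⟩
    exact hkey s hs1 (by linarith)
  · -- f never exceeds tm : distFun f tm = 0 ≤ any s
    push_neg at hnex
    refine ⟨1, one_pos, fun s hs1 _ _ => ?_⟩
    exact hkey s hs1 (by rw [distFun_eq_zero hnex]; exact hs1)

/-- Continuity of the Schwarz symmetrization. -/
lemma schwarz_continuous (hn : 1 ≤ n) (hf : Continuous f) (hf0 : ∀ x, 0 ≤ f x)
    (hfc : HasCompactSupport f) {M : ℝ} (hM : ∀ x, f x ≤ M) (hM0 : 0 ≤ M) :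
    Continuous (schwarz f) := by
  rw [Metric.continuous_iff]
  intro x0 ε hε
  set s0 : ℝ := omegaN n * ‖x0‖ ^ n with hs0def
  have hs0 : 0 ≤ s0 := by
    rw [hs0def]
    exact mul_nonneg ENNReal.toReal_nonneg (by positivity)
  obtain ⟨δ1, hδ1, h1⟩ := decRearr_right (f := f) hM hs0 (half_pos hε)
  obtain ⟨δ2, hδ2, h2⟩ := decRearr_left hn hf hf0 hfc hM hM0 hs0 (half_pos hε)
  -- continuity of x ↦ ω ‖x‖ ^ n at x0
  have hg : Continuous (fun x : En n => omegaN n * ‖x‖ ^ n) := by continuity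
  rw [Metric.continuous_iff] at hg
  obtain ⟨δ, hδ, hgδ⟩ := hg x0 (min δ1 δ2) (lt_min hδ1 hδ2)
  refine ⟨δ, hδ, fun x hx => ?_⟩
  have hgx := hgδ x hx
  rw [Real.dist_eq] at hgx ⊢
  set s : ℝ := omegaN n * ‖x‖ ^ n with hsdef
  have hs : 0 ≤ s := mul_nonneg ENNReal.toReal_nonneg (by positivity)
  have habs1 : s < s0 + δ1 := by
    have := abs_lt.mp (lt_of_lt_of_le hgx (min_le_left _ _))
    linarith [this.2]
  have habs2 : s0 - δ2 < s := by
    have := abs_lt.mp (lt_of_lt_of_le hgx (min_le_right _ _))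
    linarith [this.1]
  rw [schwarz, schwarz, ← hsdef, ← hs0def]
  rcases le_or_gt s s0 with hcase | hcase
  · have hb1 : decRearr f s0 ≤ decRearr f s := decRearr_anti hM hs hcase
    have hb2 : decRearr f s ≤ decRearr f s0 + ε/2 := h2 s hs habs2 hcase
    rw [abs_lt]; constructor <;> linarith
  · have hb1 : decRearr f s ≤ decRearr f s0 := decRearr_anti hM hs0 (le_of_lt hcase)
    have hb2 : decRearr f s0 - ε/2 ≤ decRearr f s := h1 s (le_of_lt hcase) habs1
    rw [abs_lt]; constructor <;> linarith

/-- L∞ contraction property of decRearr. -/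
lemma decRearr_le_add {M c s : ℝ} (hgc : HasCompactSupport g) (hMg : ∀ x, g x ≤ M)
    (hc : 0 ≤ c) (hs : 0 ≤ s) (h : ∀ x, f x ≤ g x + c) :
    decRearr f s ≤ decRearr g s + c := by
  apply Real.sSup_le ?_ (by have := decRearr_nonneg (f := g) (s := s); linarith)
  intro t ht
  obtain ⟨ht0, hst⟩ := ht
  rcases le_or_gt t c with hcase | hcase
  · have := decRearr_nonneg (f := g) (s := s); linarith
  · have hsub : {x | t < f x} ⊆ {x | t - c < g x} := by
      intro x hx
      simp only [mem_setOf_eq] at hx ⊢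
      linarith [h x]
    have hd : distFun f t ≤ distFun g (t - c) := by
      apply ENNReal.toReal_mono (volume_lev_lt_top hgc (by linarith)).ne
      exact measure_mono hsub
    have hmem : t - c ∈ {t' : ℝ | 0 ≤ t' ∧ s < distFun g t'} := ⟨by linarith, by linarith⟩
    have := le_csSup (bddAbove_set hMg hs) hmem
    rw [decRearr]; linarith
section Steiner
variable {u : En n × En m → ℝ} {K : ℝ≥0}

/-- slices of a compactly supported function have compact support. -/
lemma slice_compactSupport (huc : HasCompactSupport u) {R : ℝ}
    (hR : tsupport u ⊆ closedBall 0 R) (y : En m) :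
    HasCompactSupport (fun x => u (x, y)) := by
  apply HasCompactSupport.intro (isCompact_closedBall (0 : En n) R)
  intro x hx
  by_contra h
  have hmem := hR (subset_tsupport u h)
  rw [mem_closedBall, dist_zero_right] at hmem
  exact hx (mem_closedBall_zero_iff.mpr (le_trans (norm_fst_le (x, y)) hmem))

lemma slice_vanish (huc : HasCompactSupport u) {R : ℝ}
    (hR : tsupport u ⊆ closedBall 0 R) {y : En m} (hy : R < ‖y‖) (x : En n) :
    u (x, y) = 0 := by
  by_contra h
  have hmem := hR (subset_tsupport u h)
  rw [mem_closedBall, dist_zero_right] at hmem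
  exact absurd (le_trans (norm_snd_le (x, y)) hmem) (not_le.mpr hy)

/-- steiner is Lipschitz in the y variable, uniformly in x. -/
lemma steiner_y_lip (hul : LipschitzWith K u) (huc : HasCompactSupport u)
    {R M : ℝ} (hR : tsupport u ⊆ closedBall 0 R) (hM : ∀ z, u z ≤ M)
    (x : En n) (y y' : En m) :
    |steiner u (x, y) - steiner u (x, y')| ≤ K * ‖y - y'‖ := by
  have hs : (0:ℝ) ≤ omegaN n * ‖x‖ ^ n := mul_nonneg ENNReal.toReal_nonneg (by positivity)
  have key : ∀ y1 y2 : En m, steiner u (x, y1) ≤ steiner u (x, y2) + K * ‖y1 - y2‖ := by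
    intro y1 y2
    apply decRearr_le_add (slice_compactSupport huc hR y2) (fun x' => hM _)
      (by positivity) hs
    intro x'
    have := hul.dist_le_mul (x', y1) (x', y2)
    rw [Prod.dist_eq] at this
    simp only [dist_self, dist_eq_norm] at this
    have hb : dist (u (x', y1)) (u (x', y2)) ≤ K * ‖y1 - y2‖ := by
      refine le_trans this ?_
      gcongr
      simp [max_le_iff, norm_nonneg]
    rw [Real.dist_eq, abs_le] at hb
    linarith [hb.2]
  have h1 := key y y'
  have h2 := key y' y
  rw [abs_le]
  rw [norm_sub_rev y' y] at h2
  constructor <;> linarith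

/-- steiner is continuous (n ≥ 1). -/
lemma steiner_continuous (hn : 1 ≤ n) (hul : LipschitzWith K u) (huc : HasCompactSupport u)
    (hu0 : ∀ z, 0 ≤ u z) {R M : ℝ} (hR : tsupport u ⊆ closedBall 0 R) (hM : ∀ z, u z ≤ M)
    (hM0 : 0 ≤ M) : Continuous (steiner u) := by
  rw [Metric.continuous_iff]
  rintro ⟨x0, y0⟩ ε hε
  -- continuity in x at fixed y0
  have hcx : Continuous (fun x => steiner u (x, y0)) := by
    exact schwarz_continuous hn (hul.continuous.comp (by continuity)) (fun x => hu0 _)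
      (slice_compactSupport huc hR y0) (fun x => hM _) hM0
  rw [Metric.continuous_iff] at hcx
  obtain ⟨δ1, hδ1, h1⟩ := hcx x0 (ε/2) (half_pos hε)
  -- choose δ2 to control the y variation
  set δ2 : ℝ := if hK : (K:ℝ) = 0 then 1 else (ε/2) / K with hδ2def
  have hδ2 : 0 < δ2 := by
    rw [hδ2def]
    split_ifs with h
    · exact one_pos
    · have : (0:ℝ) < K := lt_of_le_of_ne K.coe_nonneg (Ne.symm h)
      exact div_pos (half_pos hε) this
  have hyb : ∀ y : En m, dist y y0 < δ2 → K * ‖y - y0‖ ≤ ε/2 := by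
    intro y hy
    rw [hδ2def] at hy
    split_ifs at hy with h
    · rw [h, zero_mul]; linarith
    · have hK : (0:ℝ) < K := lt_of_le_of_ne K.coe_nonneg (Ne.symm h)
      rw [← dist_eq_norm]
      calc (K:ℝ) * dist y y0 ≤ K * ((ε/2)/K) := by nlinarith [dist_nonneg (x := y) (y := y0)]
      _ = ε/2 := by field_simp
  refine ⟨min δ1 δ2, lt_min hδ1 hδ2, ?_⟩
  rintro ⟨x, y⟩ hxy
  rw [Prod.dist_eq, max_lt_iff] at hxy
  have hdx : dist x x0 < δ1 := lt_of_lt_of_le hxy.1 (min_le_left _ _)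
  have hdy : dist y y0 < δ2 := lt_of_lt_of_le hxy.2 (min_le_right _ _)
  have b1 : |steiner u (x, y) - steiner u (x, y0)| ≤ ε/2 :=
    le_trans (steiner_y_lip hul huc hR hM x y y0) (by rw [← dist_eq_norm]; exact hyb y hdy)
  have b2 : |steiner u (x, y0) - steiner u (x0, y0)| < ε/2 := by
    have := h1 x hdx
    rwa [Real.dist_eq] at this
  rw [Real.dist_eq]
  calc |steiner u (x, y) - steiner u (x0, y0)|
      ≤ |steiner u (x, y) - steiner u (x, y0)| + |steiner u (x, y0) - steiner u (x0, y0)| := by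
        have := abs_sub_abs_le_abs_sub (steiner u (x, y)) (steiner u (x0, y0))
        exact abs_sub_le _ _ _
  _ < ε := by linarith

end Steiner
/-- if the set is empty for threshold s, decRearr is 0. -/
lemma decRearr_eq_zero {s : ℝ} (h : ∀ t, 0 ≤ t → distFun f t ≤ s) : decRearr f s = 0 := by
  have : {t : ℝ | 0 ≤ t ∧ s < distFun f t} = ∅ := by
    ext t
    simp only [mem_setOf_eq, mem_empty_iff_false, iff_false, not_and, not_lt]
    exact h t
  rw [decRearr, this, Real.sSup_empty]

lemma distFun_zero_fun {t : ℝ} (ht : 0 ≤ t) (h : ∀ x, f x = 0) : distFun f t = 0 := by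
  have : {x : En n | t < f x} = ∅ := by
    ext x
    simp only [mem_setOf_eq, mem_empty_iff_false, iff_false, not_lt, h x]
    exact ht
  rw [distFun, this, measure_empty, ENNReal.toReal_zero]

section Steiner
variable {u : En n × En m → ℝ}

lemma steiner_nonneg (z : En n × En m) : 0 ≤ steiner u z :=
  Real.sSup_nonneg (fun _ ht => ht.1)

lemma steiner_le {M : ℝ} (hM : ∀ z, u z ≤ M) (hM0 : 0 ≤ M) (z : En n × En m) :
    steiner u z ≤ M :=
  Real.sSup_le (fun t ht => by
    -- reuse mem_set_le logic inline
    obtain ⟨ht0, hst⟩ := ht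
    have hs : (0:ℝ) ≤ omegaN n * ‖z.1‖ ^ n := mul_nonneg ENNReal.toReal_nonneg (by positivity)
    have hpos : 0 < distFun (fun x => u (x, z.2)) t := lt_of_le_of_lt hs hst
    have hne : volume {x : En n | t < u (x, z.2)} ≠ 0 := by
      intro h0
      rw [distFun, h0, ENNReal.toReal_zero] at hpos
      exact lt_irrefl _ hpos
    obtain ⟨x, hx⟩ := nonempty_of_measure_ne_zero hne
    exact le_trans (le_of_lt hx) (hM _)) hM0

/-- steiner has compact support. -/
lemma steiner_compactSupport (hn : 1 ≤ n) (huc : HasCompactSupport u)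
    {R : ℝ} (hR0 : 0 ≤ R) (hR : tsupport u ⊆ closedBall 0 R) :
    HasCompactSupport (steiner u) := by
  set c : ℝ := (volume (closedBall (0 : En n) R)).toReal with hcdef
  have hc0 : 0 ≤ c := ENNReal.toReal_nonneg
  have hω := omegaN_pos hn
  set r0 : ℝ := ((c+1)/omegaN n) ^ (1/(n:ℝ)) with hr0def
  have hr0 : 0 ≤ r0 := Real.rpow_nonneg (by positivity) _
  have hr0n : omegaN n * r0 ^ n ≥ c + 1 := by
    have : r0 ^ n = (c+1)/omegaN n := by
      rw [hr0def, ← Real.rpow_natCast (((c+1) / omegaN n) ^ (1/(n:ℝ))) n,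
        ← Real.rpow_mul (by positivity), one_div, inv_mul_cancel₀ (by
          exact_mod_cast (Nat.one_le_iff_ne_zero.mp hn)), Real.rpow_one]
    rw [this]
    field_simp
    exact le_rfl
  apply HasCompactSupport.intro
    ((isCompact_closedBall (0:En n) r0).prod (isCompact_closedBall (0:En m) R))
  rintro ⟨x, y⟩ hxy
  simp only [mem_prod, mem_closedBall, dist_zero_right, not_and_or, not_le] at hxy
  show schwarz (fun x' => u (x', y)) x = 0
  rcases hxy with hx | hy
  · -- x far : the slice superlevel sets all have measure at most c < ω‖x‖^n
    apply decRearr_eq_zero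
    intro t ht
    have hsub : {x' : En n | t < u (x', y)} ⊆ closedBall (0:En n) R := by
      intro x' hx'
      have hne : u (x', y) ≠ 0 := ne_of_gt (lt_of_le_of_lt ht hx')
      have := hR (subset_tsupport u hne)
      rw [mem_closedBall, dist_zero_right] at this ⊢
      exact le_trans (norm_fst_le (x', y)) this
    have h1 : distFun (fun x' => u (x', y)) t ≤ c := by
      rw [distFun, hcdef]
      apply ENNReal.toReal_mono (measure_closedBall_lt_top).ne
      exact measure_mono hsub
    have h2 : c + 1 ≤ omegaN n * ‖x‖ ^ n := by
      refine le_trans hr0n ?_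
      exact mul_le_mul_of_nonneg_left (pow_le_pow_left₀ hr0 (le_of_lt hx) n) (le_of_lt hω)
    linarith
  · -- y far : the slice vanishes identically
    apply decRearr_eq_zero
    intro t ht
    rw [distFun_zero_fun ht]
    · exact mul_nonneg ENNReal.toReal_nonneg (by positivity)
    · intro x'
      by_contra h
      have := hR (subset_tsupport u h)
      rw [mem_closedBall, dist_zero_right] at this
      exact absurd (le_trans (norm_snd_le (x', y)) this) (not_le.mpr hy)

end Steiner
/-- The layer-cake formula for the integral of a product. -/
lemma lintegral_mul_layercake (F G : En n → ℝ) (hF : Continuous F) (hG : Continuous G)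
    (hF0 : ∀ x, 0 ≤ F x) (hG0 : ∀ x, 0 ≤ G x) :
    ∫⁻ x, ENNReal.ofReal (F x) * ENNReal.ofReal (G x) ∂volume
      = ∫⁻ t in Ioi (0:ℝ), ∫⁻ s in Ioi (0:ℝ),
          volume ({x | s < G x} ∩ {x | t < F x}) ∂volume ∂volume := by
  have hmF : Measurable fun x => ENNReal.ofReal (F x) := (ENNReal.measurable_ofReal).comp hF.measurable
  have hmG : Measurable fun x => ENNReal.ofReal (G x) := (ENNReal.measurable_ofReal).comp hG.measurable
  set ν : Measure (En n) := volume.withDensity (fun x => ENNReal.ofReal (G x)) with hν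
  have h1 : ∫⁻ x, ENNReal.ofReal (F x) * ENNReal.ofReal (G x) ∂volume
      = ∫⁻ x, ENNReal.ofReal (F x) ∂ν := by
    rw [hν, lintegral_withDensity_eq_lintegral_mul volume hmG hmF]
    congr 1
    ext x
    simp [mul_comm]
  rw [h1, lintegral_eq_lintegral_meas_lt ν (Eventually.of_forall hF0) hF.aemeasurable]
  apply lintegral_congr_ae
  filter_upwards [ae_restrict_mem measurableSet_Ioi] with t (ht : 0 < t)
  have hSm : MeasurableSet {x : En n | t < F x} := (isOpen_lt continuous_const hF).measurableSet
  rw [hν, withDensity_apply _ hSm]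
  rw [lintegral_eq_lintegral_meas_lt (volume.restrict {x | t < F x})
    (Eventually.of_forall hG0) hG.aemeasurable]
  apply lintegral_congr_ae
  filter_upwards [ae_restrict_mem measurableSet_Ioi] with s (hs : 0 < s)
  rw [Measure.restrict_apply (isOpen_lt continuous_const hG).measurableSet]

/-- Equimeasurability of the Schwarz rearrangement. -/
lemma volume_lev_schwarz (hn : 1 ≤ n) {M : ℝ} (hfc : HasCompactSupport f) (hM : ∀ x, f x ≤ M)
    {t : ℝ} (ht : 0 ≤ t) :
    volume {x : En n | t < schwarz f x} = volume {x : En n | t < f x} := by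
  have h1 : {x : En n | t < schwarz f x} = {x : En n | omegaN n * ‖x‖ ^ n < distFun f t} := by
    ext x
    exact schwarz_gt_iff hfc hM ht x
  rw [h1, volume_omega_lt hn, distFun, ENNReal.ofReal_toReal (volume_lev_lt_top hfc ht).ne]

/-- The key pointwise comparison of the layers. -/
lemma layer_le (hn : 1 ≤ n) {Mf Mg : ℝ} (hfc : HasCompactSupport f) (hMf : ∀ x, f x ≤ Mf)
    (hgc : HasCompactSupport g) (hMg : ∀ x, g x ≤ Mg) {t s : ℝ} (ht : 0 ≤ t) (hs : 0 ≤ s) :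
    volume ({x | s < g x} ∩ {x | t < f x})
      ≤ volume ({x | s < schwarz g x} ∩ {x | t < schwarz f x}) := by
  have hg1 : {x : En n | s < schwarz g x} = {x : En n | omegaN n * ‖x‖ ^ n < distFun g s} := by
    ext x; exact schwarz_gt_iff hgc hMg hs x
  have hf1 : {x : En n | t < schwarz f x} = {x : En n | omegaN n * ‖x‖ ^ n < distFun f t} := by
    ext x; exact schwarz_gt_iff hfc hMf ht x
  rw [hg1, hf1]
  rcases le_total (distFun g s) (distFun f t) with hc | hc
  · have hint : {x : En n | omegaN n * ‖x‖ ^ n < distFun g s}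
        ∩ {x : En n | omegaN n * ‖x‖ ^ n < distFun f t}
        = {x : En n | omegaN n * ‖x‖ ^ n < distFun g s} := by
      apply inter_eq_self_of_subset_left
      intro x hx
      exact lt_of_lt_of_le hx hc
    rw [hint, volume_omega_lt hn, distFun, ENNReal.ofReal_toReal (volume_lev_lt_top hgc hs).ne]
    exact measure_mono inter_subset_left
  · have hint : {x : En n | omegaN n * ‖x‖ ^ n < distFun g s}
        ∩ {x : En n | omegaN n * ‖x‖ ^ n < distFun f t}
        = {x : En n | omegaN n * ‖x‖ ^ n < distFun f t} := by
      apply inter_eq_self_of_subset_right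
      intro x hx
      exact lt_of_lt_of_le hx hc
    rw [hint, volume_omega_lt hn, distFun, ENNReal.ofReal_toReal (volume_lev_lt_top hfc ht).ne]
    exact measure_mono inter_subset_right

/-- The Hardy–Littlewood inequality on a slice. -/
lemma slice_HL (hn : 1 ≤ n) {Mf Mg : ℝ}
    (hf : Continuous f) (hg : Continuous g) (hf0 : ∀ x, 0 ≤ f x) (hg0 : ∀ x, 0 ≤ g x)
    (hfc : HasCompactSupport f) (hgc : HasCompactSupport g)
    (hMf : ∀ x, f x ≤ Mf) (hMg : ∀ x, g x ≤ Mg)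
    (hfs : Continuous (schwarz f)) (hgs : Continuous (schwarz g))
    (hfsc : HasCompactSupport (schwarz f)) (hgsc : HasCompactSupport (schwarz g)) :
    ∫ x, f x * g x ∂volume ≤ ∫ x, schwarz f x * schwarz g x ∂volume := by
  have key : ∫⁻ x, ENNReal.ofReal (f x) * ENNReal.ofReal (g x) ∂volume
      ≤ ∫⁻ x, ENNReal.ofReal (schwarz f x) * ENNReal.ofReal (schwarz g x) ∂volume := by
    rw [lintegral_mul_layercake f g hf hg hf0 hg0,
      lintegral_mul_layercake (schwarz f) (schwarz g) hfs hgs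
        (fun x => schwarz_nonneg x) (fun x => schwarz_nonneg x)]
    apply lintegral_mono_ae
    filter_upwards [ae_restrict_mem measurableSet_Ioi] with t (ht : 0 < t)
    apply lintegral_mono_ae
    filter_upwards [ae_restrict_mem measurableSet_Ioi] with s (hs : 0 < s)
    exact layer_le hn hfc hMf hgc hMg (le_of_lt ht) (le_of_lt hs)
  have e1 : ∫ x, f x * g x ∂volume
      = (∫⁻ x, ENNReal.ofReal (f x) * ENNReal.ofReal (g x) ∂volume).toReal := by
    rw [integral_eq_lintegral_of_nonneg_ae (Eventually.of_forall (fun x => mul_nonneg (hf0 x) (hg0 x)))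
      ((hf.mul hg).aestronglyMeasurable)]
    congr 1
    apply lintegral_congr
    intro x
    rw [ENNReal.ofReal_mul (hf0 x)]
  have e2 : ∫ x, schwarz f x * schwarz g x ∂volume
      = (∫⁻ x, ENNReal.ofReal (schwarz f x) * ENNReal.ofReal (schwarz g x) ∂volume).toReal := by
    rw [integral_eq_lintegral_of_nonneg_ae (Eventually.of_forall
        (fun x => mul_nonneg (schwarz_nonneg x) (schwarz_nonneg x)))
      ((hfs.mul hgs).aestronglyMeasurable)]
    congr 1
    apply lintegral_congr
    intro x
    rw [ENNReal.ofReal_mul (schwarz_nonneg x)]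
  rw [e1, e2]
  apply ENNReal.toReal_mono ?_ key
  -- finiteness of the starred side
  have hint : Integrable (fun x => schwarz f x * schwarz g x) volume :=
    (hfs.mul hgs).integrable_of_hasCompactSupport (hfsc.mul_right)
  have := hint.hasFiniteIntegral
  rw [HasFiniteIntegral] at this
  have heq : ∀ x : En n, ENNReal.ofReal (schwarz f x) * ENNReal.ofReal (schwarz g x)
      = ‖schwarz f x * schwarz g x‖ₑ := by
    intro x
    rw [← ENNReal.ofReal_mul (schwarz_nonneg x), ← Real.enorm_eq_ofReal
      (mul_nonneg (schwarz_nonneg x) (schwarz_nonneg x))]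
  rw [lintegral_congr heq]
  exact this.ne
/-- Variant of `LipschitzWith.ae_lineDifferentiableAt` assuming only Lipschitz continuity
along the direction `v` (plus global continuity). -/
lemma ae_lineDiff {E : Type*} [NormedAddCommGroup E] [NormedSpace ℝ E] [MeasurableSpace E]
    [BorelSpace E] [FiniteDimensional ℝ E] (μ : Measure E) [μ.IsAddHaarMeasure]
    {f : E → ℝ} (hf : Continuous f) (v : E) {C : ℝ≥0}
    (hlip : ∀ p : E, LipschitzWith C (fun t : ℝ => f (p + t • v))) :
    ∀ᵐ p ∂μ, LineDifferentiableAt ℝ f p v := by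
  let L : ℝ →L[ℝ] E := ContinuousLinearMap.smulRight (1 : ℝ →L[ℝ] ℝ) v
  suffices A : ∀ p, ∀ᵐ (t : ℝ) ∂volume, LineDifferentiableAt ℝ f (p + t • v) v from
    ae_mem_of_ae_add_linearMap_mem L.toLinearMap volume μ
      (measurableSet_lineDifferentiableAt hf) (by
        intro y
        filter_upwards [A y] with t ht
        have ht' : LineDifferentiableAt ℝ f (y + t • v) v := by simpa [L] using ht
        exact ht')
  intro p
  have : ∀ᵐ (s : ℝ), DifferentiableAt ℝ (fun t ↦ f (p + t • v)) s := (hlip p).ae_differentiableAt_real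
  filter_upwards [this] with s hs
  have h's : DifferentiableAt ℝ (fun t ↦ f (p + t • v)) (s + 0) := by simpa using hs
  have : DifferentiableAt ℝ (fun t : ℝ ↦ s + t) 0 := differentiableAt_id.const_add _
  simp only [LineDifferentiableAt]
  convert h's.comp 0 this with _ t
  · rfl
  · rfl
  simp only [Function.comp_apply, add_assoc, add_smul]

variable {E : Type*} [NormedAddCommGroup E] [NormedSpace ℝ E] [MeasurableSpace E]
    [BorelSpace E] [FiniteDimensional ℝ E] (μ : Measure E) [μ.IsAddHaarMeasure]

/-- expansion of the second-difference integral. -/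
lemma I_expand {U W : E → ℝ} (hU : Continuous U) (hW : Continuous W)
    (hUc : HasCompactSupport U) (hWc : HasCompactSupport W) (a : E) :
    ∫ z, (U (z + a) - U z) * (W (z + a) - W z) ∂μ
      = 2 * (∫ z, U z * W z ∂μ) - (∫ z, U (z + a) * W z ∂μ) - (∫ z, U (z - a) * W z ∂μ) := by
  have hUa : Continuous fun z => U (z + a) := hU.comp (continuous_id.add continuous_const)
  have hUma : Continuous fun z => U (z - a) := hU.comp (continuous_id.sub continuous_const)
  have hWa : Continuous fun z => W (z + a) := hW.comp (continuous_id.add continuous_const)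
  have hUca : HasCompactSupport fun z => U (z + a) := by
    apply HasCompactSupport.comp_homeomorph hUc (Homeomorph.addRight a)
  have hUcma : HasCompactSupport fun z => U (z - a) := by
    simpa [sub_eq_add_neg, Function.comp_def] using HasCompactSupport.comp_homeomorph hUc (Homeomorph.addRight (-a))
  have hWca : HasCompactSupport fun z => W (z + a) := by
    apply HasCompactSupport.comp_homeomorph hWc (Homeomorph.addRight a)
  have i1 : Integrable (fun z => U (z + a) * W (z + a)) μ :=
    (hUa.mul hWa).integrable_of_hasCompactSupport (hUca.mul_right)
  have i2 : Integrable (fun z => U (z + a) * W z) μ :=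
    (hUa.mul hW).integrable_of_hasCompactSupport (hUca.mul_right)
  have i3 : Integrable (fun z => U z * W (z + a)) μ :=
    (hU.mul hWa).integrable_of_hasCompactSupport (hWca.mul_left)
  have i4 : Integrable (fun z => U z * W z) μ :=
    (hU.mul hW).integrable_of_hasCompactSupport (hUc.mul_right)
  have hexp : ∀ z, (U (z + a) - U z) * (W (z + a) - W z)
      = U (z + a) * W (z + a) - U (z + a) * W z - (U z * W (z + a) - U z * W z) := by
    intro z; ring
  rw [integral_congr_ae (Eventually.of_forall hexp)]
  have i12 : Integrable (fun z => U (z + a) * W (z + a) - U (z + a) * W z) μ := i1.sub i2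
  have i34 : Integrable (fun z => U z * W (z + a) - U z * W z) μ := i3.sub i4
  rw [show (fun z => U (z + a) * W (z + a) - U (z + a) * W z - (U z * W (z + a) - U z * W z))
      = (fun z => (U (z + a) * W (z + a) - U (z + a) * W z) - (U z * W (z + a) - U z * W z)) from rfl]
  rw [integral_sub i12 i34, integral_sub i1 i2, integral_sub i3 i4]
  have t1 : ∫ z, U (z + a) * W (z + a) ∂μ = ∫ z, U z * W z ∂μ :=
    integral_add_right_eq_self (fun z => U z * W z) a
  have t3 : ∫ z, U z * W (z + a) ∂μ = ∫ z, U (z - a) * W z ∂μ := by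
    have : ∀ z : E, U z * W (z + a) = U ((z + a) - a) * W (z + a) := by
      intro z; rw [add_sub_cancel_right]
    rw [integral_congr_ae (Eventually.of_forall this)]
    exact integral_add_right_eq_self (fun z => U (z - a) * W z) a
  rw [t1, t3]
  ring

/-- Dominated convergence for products of difference quotients. -/
lemma tendsto_DQ {U W : E → ℝ} (hU : Continuous U) (hW : Continuous W)
    (hUc : HasCompactSupport U) (hWc : HasCompactSupport W) {v : E}
    {CU CW : ℝ} (hCU : 0 ≤ CU) (hCW : 0 ≤ CW)
    (hUL : ∀ z (t : ℝ), |U (z + t • v) - U z| ≤ CU * |t|)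
    (hWL : ∀ z (t : ℝ), |W (z + t • v) - W z| ≤ CW * |t|)
    (hUd : ∀ᵐ z ∂μ, LineDifferentiableAt ℝ U z v)
    (hWd : ∀ᵐ z ∂μ, LineDifferentiableAt ℝ W z v) :
    Tendsto (fun t : ℝ => ∫ z, (t⁻¹ * (U (z + t • v) - U z)) * (t⁻¹ * (W (z + t • v) - W z)) ∂μ)
      (𝓝[>] (0:ℝ)) (𝓝 (∫ z, lineDeriv ℝ U z v * lineDeriv ℝ W z v ∂μ)) := by
  set S : Set E := cthickening ‖v‖ (tsupport U) with hS
  have hScomp : IsCompact S := hUc.cthickening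
  have hbound_int : Integrable (S.indicator fun _ => CU * CW) μ := by
    apply (integrable_indicator_iff hScomp.measurableSet).mpr
    exact integrableOn_const hScomp.measure_lt_top.ne
  apply tendsto_integral_filter_of_dominated_convergence (S.indicator fun _ => CU * CW)
  · -- measurability
    filter_upwards with t
    apply Continuous.aestronglyMeasurable
    have h1 : Continuous fun z => U (z + t • v) := hU.comp (continuous_id.add continuous_const)
    have h2 : Continuous fun z => W (z + t • v) := hW.comp (continuous_id.add continuous_const)
    continuity
  · -- bound
    filter_upwards [Ioc_mem_nhdsGT one_pos] with t ht
    filter_upwards with z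
    rcases em (z ∈ S) with hz | hz
    · rw [indicator_of_mem hz]
      have h0 : t ≠ 0 := ne_of_gt ht.1
      have b1 : |t⁻¹ * (U (z + t • v) - U z)| ≤ CU := by
        rw [abs_mul, abs_inv]
        rw [inv_mul_le_iff₀ (abs_pos.mpr h0)]
        calc |U (z + t • v) - U z| ≤ CU * |t| := hUL z t
        _ = |t| * CU := mul_comm _ _
      have b2 : |t⁻¹ * (W (z + t • v) - W z)| ≤ CW := by
        rw [abs_mul, abs_inv]
        rw [inv_mul_le_iff₀ (abs_pos.mpr h0)]
        calc |W (z + t • v) - W z| ≤ CW * |t| := hWL z t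
        _ = |t| * CW := mul_comm _ _
      calc ‖t⁻¹ * (U (z + t • v) - U z) * (t⁻¹ * (W (z + t • v) - W z))‖
          = |t⁻¹ * (U (z + t • v) - U z)| * |t⁻¹ * (W (z + t • v) - W z)| := by
            rw [Real.norm_eq_abs, abs_mul]
      _ ≤ CU * CW := by
            apply mul_le_mul b1 b2 (abs_nonneg _) hCU
    · -- outside S, both U z and U (z + t v) vanish
      rw [indicator_of_notMem hz]
      have hz1 : U z = 0 := by
        by_contra h
        exact hz (self_subset_cthickening _ (subset_tsupport U h))
      have hz2 : U (z + t • v) = 0 := by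
        by_contra h
        apply hz
        have hmem : z + t • v ∈ tsupport U := subset_tsupport U h
        apply mem_cthickening_of_dist_le z (z + t•v) ‖v‖ (tsupport U) hmem
        rw [dist_eq_norm]
        simp only [sub_add_cancel_left, norm_neg, norm_smul, Real.norm_eq_abs]
        calc |t| * ‖v‖ ≤ 1 * ‖v‖ := by
              apply mul_le_mul_of_nonneg_right _ (norm_nonneg v)
              rw [abs_of_nonneg (le_of_lt ht.1)]
              exact ht.2
        _ = ‖v‖ := one_mul _
      rw [hz1, hz2]
      simp
  · exact hbound_int
  · -- pointwise convergence
    filter_upwards [hUd, hWd] with z hzU hzW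
    have key : ∀ (F : E → ℝ), LineDifferentiableAt ℝ F z v →
        Tendsto (fun t : ℝ => t⁻¹ * (F (z + t • v) - F z)) (𝓝[>] 0)
        (𝓝 (lineDeriv ℝ F z v)) := by
      intro F hF
      have hg : DifferentiableAt ℝ (fun t : ℝ => F (z + t • v)) 0 := hF
      have hd := hg.hasDerivAt
      rw [hasDerivAt_iff_tendsto_slope] at hd
      have hmono : (𝓝[>] (0:ℝ)) ≤ 𝓝[≠] (0:ℝ) :=
        nhdsWithin_mono _ (fun t (ht : 0 < t) => ne_of_gt ht)
      have := hd.mono_left hmono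
      apply Tendsto.congr ?_ this
      intro t
      simp only [slope_def_field]
      rw [div_eq_inv_mul, sub_zero]
      simp
    exact Tendsto.mul (key U hzU) (key W hzW)

/-- Hardy–Littlewood inequality on the product space, for a translate in the `y` direction. -/
lemma prod_HL (hn : 1 ≤ n) {u w : En n × En m → ℝ}
    (hu : Continuous u) (hw : Continuous w)
    (hu0 : ∀ z, 0 ≤ u z) (hw0 : ∀ z, 0 ≤ w z)
    (huc : HasCompactSupport u) (hwc : HasCompactSupport w)
    {Mu Mw : ℝ} (hMu : ∀ z, u z ≤ Mu) (hMw : ∀ z, w z ≤ Mw)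
    (hus : Continuous (steiner u)) (hws : Continuous (steiner w))
    (husc : HasCompactSupport (steiner u)) (hwsc : HasCompactSupport (steiner w))
    (c : En m) :
    ∫ z : En n × En m, u (z.1, z.2 + c) * w z
      ≤ ∫ z : En n × En m, steiner u (z.1, z.2 + c) * steiner w z := by
  -- translates
  have hut : Continuous fun z : En n × En m => u (z.1, z.2 + c) :=
    hu.comp (continuous_fst.prodMk (continuous_snd.add continuous_const))
  have hust : Continuous fun z : En n × En m => steiner u (z.1, z.2 + c) :=
    hus.comp (continuous_fst.prodMk (continuous_snd.add continuous_const))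
  have hT : (fun z : En n × En m => (z.1, z.2 + c)) = fun z : En n × En m => z + ((0 : En n), c) := by
    funext z
    simp [Prod.ext_iff]
  have hfun : ∀ F : En n × En m → ℝ, (fun z : En n × En m => F (z.1, z.2 + c))
      = (F ∘ (Homeomorph.addRight ((0 : En n), c))) := by
    intro F
    funext z
    simp only [Function.comp_apply, Homeomorph.coe_addRight, Prod.mk_add_mk, Prod.ext_iff]
    congr 1
    simp [Prod.ext_iff]
  have hutc : HasCompactSupport fun z : En n × En m => u (z.1, z.2 + c) := by
    rw [hfun u]
    exact HasCompactSupport.comp_homeomorph huc (Homeomorph.addRight ((0 : En n), c))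
  have hustc : HasCompactSupport fun z : En n × En m => steiner u (z.1, z.2 + c) := by
    rw [hfun (steiner u)]
    exact HasCompactSupport.comp_homeomorph husc (Homeomorph.addRight ((0 : En n), c))
  have hint1 : Integrable (fun z : En n × En m => u (z.1, z.2 + c) * w z) volume :=
    (hut.mul hw).integrable_of_hasCompactSupport (hutc.mul_right)
  have hint2 : Integrable (fun z : En n × En m => steiner u (z.1, z.2 + c) * steiner w z) volume :=
    (hust.mul hws).integrable_of_hasCompactSupport (hustc.mul_right)
  -- radii for supports
  obtain ⟨Ru, hRu0, hRu⟩ : ∃ R, 0 ≤ R ∧ tsupport u ⊆ closedBall 0 R := by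
    obtain ⟨R, hR⟩ := huc.isBounded.subset_closedBall 0
    exact ⟨max R 0, le_max_right _ _, hR.trans (closedBall_subset_closedBall (le_max_left _ _))⟩
  obtain ⟨Rw, hRw0, hRw⟩ : ∃ R, 0 ≤ R ∧ tsupport w ⊆ closedBall 0 R := by
    obtain ⟨R, hR⟩ := hwc.isBounded.subset_closedBall 0
    exact ⟨max R 0, le_max_right _ _, hR.trans (closedBall_subset_closedBall (le_max_left _ _))⟩
  obtain ⟨Rus, hRus0, hRus⟩ : ∃ R, 0 ≤ R ∧ tsupport (steiner u) ⊆ closedBall 0 R := by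
    obtain ⟨R, hR⟩ := husc.isBounded.subset_closedBall 0
    exact ⟨max R 0, le_max_right _ _, hR.trans (closedBall_subset_closedBall (le_max_left _ _))⟩
  obtain ⟨Rws, hRws0, hRws⟩ : ∃ R, 0 ≤ R ∧ tsupport (steiner w) ⊆ closedBall 0 R := by
    obtain ⟨R, hR⟩ := hwsc.isBounded.subset_closedBall 0
    exact ⟨max R 0, le_max_right _ _, hR.trans (closedBall_subset_closedBall (le_max_left _ _))⟩
  rw [MeasureTheory.Measure.volume_eq_prod] at hint1 hint2 ⊢
  rw [integral_prod_symm _ hint1, integral_prod_symm _ hint2]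
  apply integral_mono (hint1.integral_prod_right) (hint2.integral_prod_right)
  intro y
  -- the slice inequality
  have huty : Continuous fun x : En n => u (x, y + c) :=
    hu.comp (continuous_id.prodMk continuous_const)
  have hwy : Continuous fun x : En n => w (x, y) :=
    hw.comp (continuous_id.prodMk continuous_const)
  have h1 : (fun x : En n => steiner u (x, y + c)) = schwarz (fun x => u (x, y + c)) := rfl
  have h2 : (fun x : En n => steiner w (x, y)) = schwarz (fun x => w (x, y)) := rfl
  have hsl := slice_HL hn (f := fun x : En n => u (x, y + c)) (g := fun x : En n => w (x, y))
    huty hwy (fun x => hu0 _) (fun x => hw0 _)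
    (slice_compactSupport huc hRu (y + c)) (slice_compactSupport hwc hRw y)
    (fun x => hMu _) (fun x => hMw _)
    (by rw [← h1]; exact hus.comp (continuous_id.prodMk continuous_const))
    (by rw [← h2]; exact hws.comp (continuous_id.prodMk continuous_const))
    (by rw [← h1]; exact slice_compactSupport husc hRus (y + c))
    (by rw [← h2]; exact slice_compactSupport hwsc hRws y)
  exact hsl
lemma En0_eq_zero (x : En 0) : x = 0 := by ext i; exact i.elim0

lemma volume_univ_En0 : (volume : Measure (En 0)) univ = 1 := by
  have h := (EuclideanSpace.volume_preserving_symm_measurableEquiv_toLp (ι := Fin 0)).measure_preimage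
    (MeasurableSet.univ (α := Fin 0 → ℝ)).nullMeasurableSet
  have h2 : (MeasurableEquiv.toLp 2 (Fin 0 → ℝ)).symm ⁻¹' univ = univ := preimage_univ
  rw [h2] at h
  rw [h]
  rw [MeasureTheory.volume_pi, Measure.pi_univ]
  simp

lemma omegaN_zero : omegaN 0 = 1 := by
  have : ball (0 : En 0) 1 = univ := by
    ext x
    simp only [mem_ball, mem_univ, iff_true]
    rw [En0_eq_zero x]
    simp
  rw [omegaN, this, volume_univ_En0, ENNReal.toReal_one]

lemma steiner_zero_dim0 {m : ℕ} (u : En 0 × En m → ℝ) : steiner u = fun _ => 0 := by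
  funext z
  show schwarz (fun x => u (x, z.2)) z.1 = 0
  rw [schwarz, omegaN_zero, pow_zero, mul_one]
  have hd : ∀ t : ℝ, distFun (fun x : En 0 => u (x, z.2)) t ≤ 1 := by
    intro t
    rw [distFun]
    have := measure_mono (μ := (volume : Measure (En 0))) (subset_univ {x : En 0 | t < u (x, z.2)})
    rw [volume_univ_En0] at this
    calc (volume {x : En 0 | t < u (x, z.2)}).toReal ≤ (1 : ℝ≥0∞).toReal :=
      ENNReal.toReal_mono (by simp) this
    _ = 1 := ENNReal.toReal_one
  have hempty : {t : ℝ | 0 ≤ t ∧ 1 < distFun (fun x : En 0 => u (x, z.2)) t} = ∅ := by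
    ext t
    simp only [mem_setOf_eq, mem_empty_iff_false, iff_false, not_and, not_lt]
    exact fun _ => hd t
  rw [decRearr, hempty, Real.sSup_empty]

/-- If u * w vanishes identically, the product of the directional derivatives vanishes. -/
lemma deriv_prod_zero {n m : ℕ} {u w : En n × En m → ℝ}
    (hu : Continuous u) (hw : Continuous w)
    (hu0 : ∀ z, 0 ≤ u z) (hw0 : ∀ z, 0 ≤ w z)
    (huw : ∀ z, u z * w z = 0) (e : En m) (z : En n × En m) :
    deriv (fun t : ℝ => u (z.1, z.2 + t • e)) 0 * deriv (fun t : ℝ => w (z.1, z.2 + t • e)) 0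
      = 0 := by
  have key : ∀ (U W : En n × En m → ℝ), Continuous U → (∀ z', 0 ≤ U z') → (∀ z', 0 ≤ W z') →
      (∀ z', U z' * W z' = 0) → 0 < U z →
      deriv (fun t : ℝ => W (z.1, z.2 + t • e)) 0 = 0 := by
    intro U W hUc hU0 hW0 hUW hUz
    have hO : IsOpen {z' : En n × En m | 0 < U z'} := isOpen_lt continuous_const hUc
    have hWO : ∀ z' ∈ {z' : En n × En m | 0 < U z'}, W z' = 0 := by
      intro z' hz'
      rcases mul_eq_zero.mp (hUW z') with h | h
      · exact absurd h (ne_of_gt hz')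
      · exact h
    have hcont : Continuous (fun t : ℝ => (z.1, z.2 + t • e)) := by continuity
    have hmem : (z.1, z.2 + (0:ℝ) • e) ∈ {z' : En n × En m | 0 < U z'} := by
      simpa using hUz
    have hev : (fun t : ℝ => W (z.1, z.2 + t • e)) =ᶠ[𝓝 (0:ℝ)] (fun _ => 0) := by
      have : ∀ᶠ t : ℝ in 𝓝 0, (z.1, z.2 + t • e) ∈ {z' : En n × En m | 0 < U z'} := by
        apply hcont.continuousAt.eventually_mem (hO.mem_nhds ?_)
        simpa using hUz
      filter_upwards [this] with t ht
      exact hWO _ ht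
    rw [hev.deriv_eq]
    exact deriv_const _ _
  rcases lt_or_eq_of_le (hu0 z) with hz | hz
  · rw [key u w hu hu0 hw0 huw hz, mul_zero]
  · -- u z = 0 : the u-derivative vanishes (minimum) or is junk 0
    have : deriv (fun t : ℝ => u (z.1, z.2 + t • e)) 0 = 0 := by
      set g : ℝ → ℝ := fun t => u (z.1, z.2 + t • e) with hg
      have hg0 : g 0 = 0 := by
        rw [hg]
        simp only [zero_smul, add_zero, Prod.mk.eta]
        exact hz.symm
      apply IsLocalMin.deriv_eq_zero
      apply Filter.Eventually.of_forall
      intro t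
      rw [hg0]
      exact hu0 _
    rw [this, zero_mul]

end PSaux

theorem polya_szego_two_fun_y {n m : ℕ} (u w : En n × En m → ℝ)
    (hul : ∃ K, LipschitzWith K u) (hwl : ∃ K, LipschitzWith K w)
    (huc : HasCompactSupport u) (hwc : HasCompactSupport w)
    (hupos : ∀ z, 0 ≤ u z) (hwpos : ∀ z, 0 ≤ w z)
    (heq : ∫ z : En n × En m, u z * w z = ∫ z : En n × En m, steiner u z * steiner w z) :
    ∀ i : Fin m,
      ∫ z : En n × En m, dery u i z * dery w i z ≥
        ∫ z : En n × En m, dery (steiner u) i z * dery (steiner w) i z := by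
  intro i
  classical
  obtain ⟨Ku, hKu⟩ := hul
  obtain ⟨Kw, hKw⟩ := hwl
  have hu : Continuous u := hKu.continuous
  have hw : Continuous w := hKw.continuous
  set e : En m := EuclideanSpace.single i (1:ℝ) with he
  have hene : ‖e‖ = 1 := by rw [he, EuclideanSpace.norm_single]; norm_num
  rcases Nat.eq_zero_or_pos n with hn0 | hn
  · -- degenerate case n = 0 : steiner vanishes identically
    subst hn0
    have hsz : steiner u = fun _ => (0:ℝ) := PSaux.steiner_zero_dim0 u
    have hswz : steiner w = fun _ => (0:ℝ) := PSaux.steiner_zero_dim0 w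
    have hRHS : ∫ z : En 0 × En m, dery (steiner u) i z * dery (steiner w) i z = 0 := by
      have hz : ∀ z : En 0 × En m, dery (steiner u) i z * dery (steiner w) i z = 0 := by
        intro z
        rw [dery, hsz]
        simp
      rw [integral_congr_ae (Filter.Eventually.of_forall hz), integral_zero]
    have h0 : ∫ z : En 0 × En m, u z * w z = 0 := by
      rw [heq]
      have : ∀ z : En 0 × En m, steiner u z * steiner w z = 0 := by
        intro z; rw [hsz, hswz]; simp
      rw [integral_congr_ae (Filter.Eventually.of_forall this), integral_zero]
    have hint : Integrable (fun z : En 0 × En m => u z * w z) volume :=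
      (hu.mul hw).integrable_of_hasCompactSupport (huc.mul_right)
    have hae := (integral_eq_zero_iff_of_nonneg
      (fun z => mul_nonneg (hupos z) (hwpos z)) hint).mp h0
    have hzero : ∀ z : En 0 × En m, u z * w z = 0 := by
      have := (Continuous.ae_eq_iff_eq volume (hu.mul hw) continuous_const).mp hae
      intro z
      exact congrFun this z
    have hLHS : ∫ z : En 0 × En m, dery u i z * dery w i z = 0 := by
      have hz : ∀ z : En 0 × En m, dery u i z * dery w i z = 0 := fun z =>
        PSaux.deriv_prod_zero hu hw hupos hwpos hzero e z
      rw [integral_congr_ae (Filter.Eventually.of_forall hz), integral_zero]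
    rw [hRHS, hLHS]
  -- main case n ≥ 1
  haveI hHaar : (volume : Measure (En n × En m)).IsAddHaarMeasure :=
    Measure.prod.instIsAddHaarMeasure _ _
  set v : En n × En m := ((0 : En n), e) with hv
  have hvne : ‖v‖ = 1 := by
    rw [hv, Prod.norm_def]
    simp [hene]
  have htrans : ∀ (p : En n × En m) (s : ℝ), p + s • v = (p.1, p.2 + s • e) := by
    intro p s
    rw [hv]
    ext <;> simp
  -- bounds
  obtain ⟨Mu, hMu'⟩ := huc.exists_bound_of_continuous hu
  obtain ⟨Mw, hMw'⟩ := hwc.exists_bound_of_continuous hw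
  have hMu : ∀ z, u z ≤ Mu := fun z => le_trans (le_abs_self _) (hMu' z)
  have hMw : ∀ z, w z ≤ Mw := fun z => le_trans (le_abs_self _) (hMw' z)
  have hMu0 : 0 ≤ Mu := le_trans (norm_nonneg (u 0)) (hMu' 0)
  have hMw0 : 0 ≤ Mw := le_trans (norm_nonneg (w 0)) (hMw' 0)
  -- radii
  obtain ⟨Ru, hRu0, hRu⟩ : ∃ R, 0 ≤ R ∧ tsupport u ⊆ closedBall 0 R := by
    obtain ⟨R, hR⟩ := huc.isBounded.subset_closedBall 0
    exact ⟨max R 0, le_max_right _ _, hR.trans (closedBall_subset_closedBall (le_max_left _ _))⟩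
  obtain ⟨Rw, hRw0, hRw⟩ : ∃ R, 0 ≤ R ∧ tsupport w ⊆ closedBall 0 R := by
    obtain ⟨R, hR⟩ := hwc.isBounded.subset_closedBall 0
    exact ⟨max R 0, le_max_right _ _, hR.trans (closedBall_subset_closedBall (le_max_left _ _))⟩
  -- steiner regularity
  have hus : Continuous (steiner u) := PSaux.steiner_continuous hn hKu huc hupos hRu hMu hMu0
  have hws : Continuous (steiner w) := PSaux.steiner_continuous hn hKw hwc hwpos hRw hMw hMw0
  have husc : HasCompactSupport (steiner u) := PSaux.steiner_compactSupport hn huc hRu0 hRu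
  have hwsc : HasCompactSupport (steiner w) := PSaux.steiner_compactSupport hn hwc hRw0 hRw
  -- Lipschitz continuity along the direction v
  have hlipS : ∀ (F : En n × En m → ℝ) (KF : ℝ≥0), LipschitzWith KF F → HasCompactSupport F →
      (∀ MR : ℝ × ℝ, (∀ z, F z ≤ MR.1) → tsupport F ⊆ closedBall 0 MR.2 →
      ∀ p : En n × En m, LipschitzWith KF (fun t : ℝ => steiner F (p + t • v))) := by
    intro F KF hKF hFc MR hMF hRF p
    apply LipschitzWith.of_dist_le_mul
    intro t t'
    rw [htrans p t, htrans p t', Real.dist_eq]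
    have hb := PSaux.steiner_y_lip hKF hFc hRF hMF p.1 (p.2 + t • e) (p.2 + t' • e)
    have hyy : p.2 + t • e - (p.2 + t' • e) = (t - t') • e := by
      rw [add_sub_add_left_eq_sub, ← sub_smul]
    rw [hyy, norm_smul, Real.norm_eq_abs, hene, mul_one] at hb
    rw [Real.dist_eq]
    exact hb
  -- a.e. line differentiability
  have hudiff : ∀ᵐ z ∂(volume : Measure (En n × En m)), LineDifferentiableAt ℝ u z v :=
    hKu.ae_lineDifferentiableAt v
  have hwdiff : ∀ᵐ z ∂(volume : Measure (En n × En m)), LineDifferentiableAt ℝ w z v :=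
    hKw.ae_lineDifferentiableAt v
  have hsudiff : ∀ᵐ z ∂(volume : Measure (En n × En m)), LineDifferentiableAt ℝ (steiner u) z v :=
    PSaux.ae_lineDiff volume hus v (hlipS u Ku hKu huc (Mu, Ru) hMu hRu)
  have hswdiff : ∀ᵐ z ∂(volume : Measure (En n × En m)), LineDifferentiableAt ℝ (steiner w) z v :=
    PSaux.ae_lineDiff volume hws v (hlipS w Kw hKw hwc (Mw, Rw) hMw hRw)
  -- difference quotient bounds
  have hUL : ∀ (z : En n × En m) (t : ℝ), |u (z + t • v) - u z| ≤ (Ku:ℝ) * |t| := by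
    intro z t
    have := hKu.dist_le_mul (z + t • v) z
    rw [Real.dist_eq, dist_eq_norm, add_sub_cancel_left, norm_smul, Real.norm_eq_abs,
      hvne, mul_one] at this
    exact this
  have hWL : ∀ (z : En n × En m) (t : ℝ), |w (z + t • v) - w z| ≤ (Kw:ℝ) * |t| := by
    intro z t
    have := hKw.dist_le_mul (z + t • v) z
    rw [Real.dist_eq, dist_eq_norm, add_sub_cancel_left, norm_smul, Real.norm_eq_abs,
      hvne, mul_one] at this
    exact this
  have hSUL : ∀ (z : En n × En m) (t : ℝ), |steiner u (z + t • v) - steiner u z| ≤ (Ku:ℝ) * |t| := by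
    intro z t
    have := (hlipS u Ku hKu huc (Mu, Ru) hMu hRu z).dist_le_mul t 0
    rw [Real.dist_eq, Real.dist_eq, sub_zero] at this
    simpa using this
  have hSWL : ∀ (z : En n × En m) (t : ℝ), |steiner w (z + t • v) - steiner w z| ≤ (Kw:ℝ) * |t| := by
    intro z t
    have := (hlipS w Kw hKw hwc (Mw, Rw) hMw hRw z).dist_le_mul t 0
    rw [Real.dist_eq, Real.dist_eq, sub_zero] at this
    simpa using this
  -- the two dominated convergence statements
  have T1 := PSaux.tendsto_DQ (volume : Measure (En n × En m)) hu hw huc hwc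
    Ku.coe_nonneg Kw.coe_nonneg hUL hWL hudiff hwdiff
  have T2 := PSaux.tendsto_DQ (volume : Measure (En n × En m)) hus hws husc hwsc
    Ku.coe_nonneg Kw.coe_nonneg hSUL hSWL hsudiff hswdiff
  -- eventual comparison of the difference quotient integrals
  have hcomp : ∀ᶠ t in 𝓝[>] (0:ℝ),
      (∫ z, (t⁻¹ * (steiner u (z + t • v) - steiner u z)) *
        (t⁻¹ * (steiner w (z + t • v) - steiner w z)) ∂(volume : Measure (En n × En m)))
      ≤ ∫ z, (t⁻¹ * (u (z + t • v) - u z)) *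
        (t⁻¹ * (w (z + t • v) - w z)) ∂(volume : Measure (En n × En m)) := by
    filter_upwards [self_mem_nhdsWithin] with t (ht : 0 < t)
    have hrw : ∀ (U W : En n × En m → ℝ),
        (fun z => (t⁻¹ * (U (z + t • v) - U z)) * (t⁻¹ * (W (z + t • v) - W z)))
        = fun z => (t⁻¹ * t⁻¹) * ((U (z + t • v) - U z) * (W (z + t • v) - W z)) := by
      intro U W; funext z; ring
    calc ∫ z, (t⁻¹ * (steiner u (z + t • v) - steiner u z)) *
          (t⁻¹ * (steiner w (z + t • v) - steiner w z)) ∂(volume : Measure (En n × En m))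
        = (t⁻¹ * t⁻¹) * ∫ z, (steiner u (z + t • v) - steiner u z) *
          (steiner w (z + t • v) - steiner w z) ∂(volume : Measure (En n × En m)) := by
          rw [hrw (steiner u) (steiner w), integral_const_mul]
    _ ≤ (t⁻¹ * t⁻¹) * ∫ z, (u (z + t • v) - u z) *
          (w (z + t • v) - w z) ∂(volume : Measure (En n × En m)) := by
          apply mul_le_mul_of_nonneg_left ?_ (by positivity)
          rw [PSaux.I_expand volume hu hw huc hwc (t • v),
            PSaux.I_expand volume hus hws husc hwsc (t • v)]
          -- rewrite the translated integrals into slice form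
          have cplus : ∀ (U W : En n × En m → ℝ),
              (∫ z, U (z + t • v) * W z ∂(volume : Measure (En n × En m)))
              = ∫ z, U (z.1, z.2 + t • e) * W z ∂(volume : Measure (En n × En m)) := by
            intro U W
            apply integral_congr_ae (Filter.Eventually.of_forall ?_)
            intro z
            rw [htrans z t]
          have cminus : ∀ (U W : En n × En m → ℝ),
              (∫ z, U (z - t • v) * W z ∂(volume : Measure (En n × En m)))
              = ∫ z, U (z.1, z.2 + (-t) • e) * W z ∂(volume : Measure (En n × En m)) := by
            intro U W
            apply integral_congr_ae (Filter.Eventually.of_forall ?_)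
            intro z
            rw [sub_eq_add_neg, ← neg_smul, htrans z (-t)]
          rw [cplus u w, cminus u w, cplus (steiner u) (steiner w),
            cminus (steiner u) (steiner w)]
          have h1 := PSaux.prod_HL hn hu hw hupos hwpos huc hwc hMu hMw
            hus hws husc hwsc (t • e)
          have h2 := PSaux.prod_HL hn hu hw hupos hwpos huc hwc hMu hMw
            hus hws husc hwsc ((-t) • e)
          linarith [heq.le, heq.ge]
    _ = ∫ z, (t⁻¹ * (u (z + t • v) - u z)) *
          (t⁻¹ * (w (z + t • v) - w z)) ∂(volume : Measure (En n × En m)) := by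
          rw [hrw u w, integral_const_mul]
  have hfinal := le_of_tendsto_of_tendsto T2 T1 hcomp
  -- translate `dery` into `lineDeriv`
  have hder : ∀ (F : En n × En m → ℝ) (z : En n × En m), dery F i z = lineDeriv ℝ F z v := by
    intro F z
    rw [dery]
    show _ = deriv (fun t : ℝ => F (z + t • v)) 0
    congr 1
    funext t
    rw [htrans z t, he]
  calc ∫ z : En n × En m, dery u i z * dery w i z
      = ∫ z : En n × En m, lineDeriv ℝ u z v * lineDeriv ℝ w z v := by
        apply integral_congr_ae (Filter.Eventually.of_forall ?_)
        intro z
        rw [hder u z, hder w z]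
  _ ≥ ∫ z : En n × En m, lineDeriv ℝ (steiner u) z v * lineDeriv ℝ (steiner w) z v := hfinal
  _ = ∫ z : En n × En m, dery (steiner u) i z * dery (steiner w) i z := by
        apply integral_congr_ae (Filter.Eventually.of_forall ?_)
        intro z
        rw [hder (steiner u) z, hder (steiner w) z]
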